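/- (Generalized Chudnovsky-type bound with degrees 1, 2, 4.) Let q be a prime power, F/F_q a function field, Q a place of degree n, D a divisor avoiding Q and all places of a set P consisting of N_1 places of degree 1, N_2 of degree 2, N_4 of degree 4, and let 0 ≤ l_i ≤ N_i for i = 1,2,4. If the evaluation map Ev_Q : L(D) → F_Q ≅ F_{q^n} is surjective and the map Ev_P : L(2D) → F_q^{N_1} × F_q^{l_1} × F_{q^2}^{N_2} × F_{q^2}^{l_2} × F_{q^4}^{N_4} × F_{q^4}^{l_4} sending f to its values and first derivative coefficients (with respect to local parameters) at the places of P is injective, then μ_q(n) ≤ N_1 + 2l_1 + 3N_2 + 6l_2 + μ_q(4)(N_4 + 2l_4). -/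

import Mathlib

/-- The bilinear complexity (tensor rank of multiplication) of a field extension `L/K`. -/
noncomputable def bilinearComplexity (K L : Type*) [Field K] [Field L] [Algebra K L] : ℕ :=
  sInf {r : ℕ | ∃ (a b : Fin r → (L →ₗ[K] K)) (c : Fin r → L),
    ∀ x y : L, x * y = ∑ i, (a i x * b i y) • c i}

/-- A place `P` of the function field `F/Fq` with residue field `E` (of degree
`[E : Fq] = deg P`): the valuation ring `O = O_P`, the evaluation `f ↦ f(P)` (reduction
modulo `P`, an `Fq`-algebra homomorphism), and the first derivative evaluation
`f ↦ f'(P)` (the coefficient of the local parameter `t` in the local expansion of `f`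
at `P`), which is `Fq`-linear and satisfies the Leibniz rule
`(fg)'(P) = f(P)g'(P) + f'(P)g(P)`. -/
structure PlaceEval (Fq F E : Type*) [Field Fq] [Field F] [Field E]
    [Algebra Fq F] [Algebra Fq E] where
  O : Subalgebra Fq F
  ev : O →ₐ[Fq] E
  ev' : O →ₗ[Fq] E
  leibniz : ∀ f g : O, ev' (f * g) = ev f * ev' g + ev' f * ev g

open Module

section Helpers

lemma formula_mem {K L : Type*} [Field K] [Field L] [Algebra K L]
    {ι : Type*} [Fintype ι] (a b : ι → (L →ₗ[K] K)) (c : ι → L)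
    (h : ∀ x y : L, x * y = ∑ i, (a i x * b i y) • c i) :
    Fintype.card ι ∈ {r : ℕ | ∃ (a b : Fin r → (L →ₗ[K] K)) (c : Fin r → L),
      ∀ x y : L, x * y = ∑ i, (a i x * b i y) • c i} := by
  classical
  let e := Fintype.equivFin ι
  refine ⟨a ∘ e.symm, b ∘ e.symm, c ∘ e.symm, fun x y => ?_⟩
  rw [h x y]
  exact (Equiv.sum_comp e.symm fun i => (a i x * b i y) • c i).symm

lemma bc_le_card {K L : Type*} [Field K] [Field L] [Algebra K L]
    {ι : Type*} [Fintype ι] (a b : ι → (L →ₗ[K] K)) (c : ι → L)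
    (h : ∀ x y : L, x * y = ∑ i, (a i x * b i y) • c i) :
    bilinearComplexity K L ≤ Fintype.card ι :=
  Nat.sInf_le (formula_mem a b c h)

lemma exists_bc_formula (K L : Type*) [Field K] [Field L] [Algebra K L]
    [FiniteDimensional K L] :
    ∃ (a b : Fin (bilinearComplexity K L) → (L →ₗ[K] K))
      (c : Fin (bilinearComplexity K L) → L),
      ∀ x y : L, x * y = ∑ i, (a i x * b i y) • c i := by
  classical
  have hne : {r : ℕ | ∃ (a b : Fin r → (L →ₗ[K] K)) (c : Fin r → L),
      ∀ x y : L, x * y = ∑ i, (a i x * b i y) • c i}.Nonempty := by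
    set B := Module.finBasis K L with hB
    refine ⟨_, formula_mem (fun p : Fin (finrank K L) × Fin (finrank K L) => B.coord p.1)
      (fun p => B.coord p.2) (fun p => B p.1 * B p.2) fun x y => ?_⟩
    conv_lhs => rw [← B.sum_repr x, ← B.sum_repr y]
    rw [Finset.sum_mul_sum, Fintype.sum_prod_type]
    simp [smul_mul_smul_comm, smul_smul, mul_comm]
  exact Nat.sInf_mem hne

lemma exists_formula_of_finrank_two (K L : Type*) [Field K] [Field L] [Algebra K L]
    (h : finrank K L = 2) :
    ∃ (a b : Fin 3 → (L →ₗ[K] K)) (c : Fin 3 → L),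
      ∀ x y : L, x * y = ∑ i, (a i x * b i y) • c i := by
  classical
  have : FiniteDimensional K L := FiniteDimensional.of_finrank_pos (by omega)
  set B := finBasisOfFinrankEq K L h with hB
  refine ⟨![B.coord 0, B.coord 0 + B.coord 1, B.coord 1],
    ![B.coord 0, B.coord 0 + B.coord 1, B.coord 1],
    ![B 0 * B 0 - B 0 * B 1, B 0 * B 1, B 1 * B 1 - B 0 * B 1], fun x y => ?_⟩
  have hx : x = B.repr x 0 • B 0 + B.repr x 1 • B 1 := by
    conv_lhs => rw [← B.sum_repr x]
    rw [Fin.sum_univ_two]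
  have hy : y = B.repr y 0 • B 0 + B.repr y 1 • B 1 := by
    conv_lhs => rw [← B.sum_repr y]
    rw [Fin.sum_univ_two]
  conv_lhs => rw [hx, hy]
  simp only [Fin.sum_univ_three, Matrix.cons_val_zero, Matrix.cons_val_one, Matrix.head_cons,
    Matrix.cons_val_two, Matrix.tail_cons, LinearMap.add_apply, Basis.coord_apply,
    Algebra.smul_def, map_add, map_mul, smul_sub]
  ring

/-- The inclusion of a submodule of `F` contained in a subalgebra `O` into `O`. -/
def sectIncl {Fq F : Type*} [Field Fq] [Field F] [Algebra Fq F]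
    (M : Submodule Fq F) (O : Subalgebra Fq F) (h : ∀ f ∈ M, f ∈ O) : M →ₗ[Fq] O where
  toFun f := ⟨f.1, h f.1 f.2⟩
  map_add' _ _ := rfl
  map_smul' _ _ := rfl

@[simp] lemma sectIncl_apply {Fq F : Type*} [Field Fq] [Field F] [Algebra Fq F]
    (M : Submodule Fq F) (O : Subalgebra Fq F) (h : ∀ f ∈ M, f ∈ O) (f : M) :
    sectIncl M O h f = ⟨f.1, h f.1 f.2⟩ := rfl

lemma sum_sum_ite_eq {ι κ M : Type*} [Fintype ι] [DecidableEq ι] [Fintype κ]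
    [AddCommMonoid M] (k : ι) (g : ι → κ → M) :
    (∑ i : ι, ∑ j : κ, if k = i then g i j else 0) = ∑ j : κ, g k j := by
  rw [Finset.sum_comm]; simp

end Helpers

set_option maxHeartbeats 3200000 in
/-- Generalized Chudnovsky-type bound with places of degrees 1, 2 and 4 and first
derivative evaluations (Proposition 3.1): if `Ev_Q : L(D) → F_Q ≅ F_{q^n}` is surjective
and the evaluation map `Ev_P` on `L(2D)` — taking values and first derivatives at `N₁`
places of degree 1 (derivatives at the first `l₁`), `N₂` places of degree 2 (derivatives
at the first `l₂`) and `N₄` places of degree 4 (derivatives at the first `l₄`) — is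
injective, then `μ_q(n) ≤ N₁ + 2l₁ + 3N₂ + 6l₂ + μ_q(4)(N₄ + 2l₄)`. -/
theorem chudnovsky_deg_1_2_4
    (Fq F E2 E4 EQ : Type*) [Field Fq] [Fintype Fq] [Field F]
    [Field E2] [Field E4] [Field EQ]
    [Algebra Fq F] [Algebra Fq E2] [Algebra Fq E4] [Algebra Fq EQ]
    (n N1 N2 N4 l1 l2 l4 : ℕ)
    (hn : Module.finrank Fq EQ = n)
    (hE2 : Module.finrank Fq E2 = 2) (hE4 : Module.finrank Fq E4 = 4)
    (hl1 : l1 ≤ N1) (hl2 : l2 ≤ N2) (hl4 : l4 ≤ N4)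
    -- the degree-`n` place `Q` and the places of `P` of degrees 1, 2, 4
    (Q : PlaceEval Fq F EQ)
    (P1 : Fin N1 → PlaceEval Fq F Fq)
    (P2 : Fin N2 → PlaceEval Fq F E2)
    (P4 : Fin N4 → PlaceEval Fq F E4)
    -- the Riemann–Roch spaces `L(D)` and `L(2D)`, with `L(D)·L(D) ⊆ L(2D)`
    (LD L2D : Submodule Fq F)
    (hmul : ∀ f ∈ LD, ∀ g ∈ LD, f * g ∈ L2D)
    -- `Q` and the places of `P` are not in the support of `D` (so all the evaluations
    -- below are defined, i.e. `L(D), L(2D) ⊆ O_P` for each place involved)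
    (hQD : ∀ f ∈ LD, f ∈ Q.O) (hQ2D : ∀ f ∈ L2D, f ∈ Q.O)
    (hP1D : ∀ i, ∀ f ∈ LD, f ∈ (P1 i).O) (hP12D : ∀ i, ∀ f ∈ L2D, f ∈ (P1 i).O)
    (hP2D : ∀ i, ∀ f ∈ LD, f ∈ (P2 i).O) (hP22D : ∀ i, ∀ f ∈ L2D, f ∈ (P2 i).O)
    (hP4D : ∀ i, ∀ f ∈ LD, f ∈ (P4 i).O) (hP42D : ∀ i, ∀ f ∈ L2D, f ∈ (P4 i).O)
    -- compatibility of `Ev_Q` with products: `(fg)(Q) = f(Q)g(Q)` (automatic from `ev`)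
    -- a) `Ev_Q : L(D) → F_{q^n}` is surjective
    (hsurj : Function.Surjective fun f : LD => Q.ev ⟨f.1, hQD f.1 f.2⟩)
    -- b) `Ev_P : L(2D) → Fq^{N₁} × Fq^{l₁} × E₂^{N₂} × E₂^{l₂} × E₄^{N₄} × E₄^{l₄}`
    --    is injective
    (hinj : Function.Injective fun f : L2D =>
      ((fun i : Fin N1 => (P1 i).ev ⟨f.1, hP12D i f.1 f.2⟩),
       (fun i : Fin l1 => (P1 (Fin.castLE hl1 i)).ev' ⟨f.1, hP12D _ f.1 f.2⟩),
       (fun i : Fin N2 => (P2 i).ev ⟨f.1, hP22D i f.1 f.2⟩),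
       (fun i : Fin l2 => (P2 (Fin.castLE hl2 i)).ev' ⟨f.1, hP22D _ f.1 f.2⟩),
       (fun i : Fin N4 => (P4 i).ev ⟨f.1, hP42D i f.1 f.2⟩),
       (fun i : Fin l4 => (P4 (Fin.castLE hl4 i)).ev' ⟨f.1, hP42D _ f.1 f.2⟩))) :
    bilinearComplexity Fq EQ ≤
      N1 + 2 * l1 + 3 * N2 + 6 * l2 + bilinearComplexity Fq E4 * (N4 + 2 * l4) := by
  classical
  have fd4 : FiniteDimensional Fq E4 := FiniteDimensional.of_finrank_pos (by omega)
  obtain ⟨a2, b2, c2, h2⟩ := exists_formula_of_finrank_two Fq E2 hE2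
  obtain ⟨a4, b4, c4, h4⟩ := exists_bc_formula Fq E4
  obtain ⟨sec, hs⟩ := (Q.ev.toLinearMap ∘ₗ sectIncl LD Q.O hQD).exists_rightInverse_of_surjective
    (LinearMap.range_eq_top.mpr (by exact hsurj))
  obtain ⟨EvP, hEvP⟩ : ∃ Z : L2D →ₗ[Fq] ((Fin N1 → Fq) × ((Fin l1 → Fq) × ((Fin N2 → E2) ×
      ((Fin l2 → E2) × ((Fin N4 → E4) × (Fin l4 → E4)))))),
      Z = (LinearMap.pi fun i : Fin N1 =>
            (P1 i).ev.toLinearMap ∘ₗ sectIncl L2D _ (hP12D i)).prod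
        ((LinearMap.pi fun i : Fin l1 =>
            (P1 (Fin.castLE hl1 i)).ev' ∘ₗ sectIncl L2D _ (hP12D _)).prod
        ((LinearMap.pi fun i : Fin N2 =>
            (P2 i).ev.toLinearMap ∘ₗ sectIncl L2D _ (hP22D i)).prod
        ((LinearMap.pi fun i : Fin l2 =>
            (P2 (Fin.castLE hl2 i)).ev' ∘ₗ sectIncl L2D _ (hP22D _)).prod
        ((LinearMap.pi fun i : Fin N4 =>
            (P4 i).ev.toLinearMap ∘ₗ sectIncl L2D _ (hP42D i)).prod
        (LinearMap.pi fun i : Fin l4 =>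
            (P4 (Fin.castLE hl4 i)).ev' ∘ₗ sectIncl L2D _ (hP42D _)))))) := ⟨_, rfl⟩
  have hinj' : Function.Injective EvP := by rw [hEvP]; exact hinj
  obtain ⟨R, hR⟩ := EvP.exists_leftInverse_of_injective (LinearMap.ker_eq_bot.mpr hinj')
  have key : ∃ (a b : (Fin N1 ⊕ (Fin l1 ⊕ Fin l1) ⊕ Fin N2 × Fin 3 ⊕ Fin l2 × (Fin 3 ⊕ Fin 3) ⊕ Fin N4 × Fin (bilinearComplexity Fq E4) ⊕ Fin l4 × (Fin (bilinearComplexity Fq E4) ⊕ Fin (bilinearComplexity Fq E4))) →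
        (EQ →ₗ[Fq] Fq))
      (c : (Fin N1 ⊕ (Fin l1 ⊕ Fin l1) ⊕ Fin N2 × Fin 3 ⊕ Fin l2 × (Fin 3 ⊕ Fin 3) ⊕ Fin N4 × Fin (bilinearComplexity Fq E4) ⊕ Fin l4 × (Fin (bilinearComplexity Fq E4) ⊕ Fin (bilinearComplexity Fq E4))) → EQ),
      ∀ x y : EQ, x * y = ∑ i, (a i x * b i y) • c i := by
    refine ⟨Sum.elim
        (fun i : Fin N1 => ((P1 i).ev.toLinearMap ∘ₗ sectIncl LD _ (hP1D i)) ∘ₗ sec)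
        (Sum.elim
          (Sum.elim
            (fun i : Fin l1 =>
              ((P1 (Fin.castLE hl1 i)).ev.toLinearMap ∘ₗ sectIncl LD _ (hP1D _)) ∘ₗ sec)
            (fun i : Fin l1 =>
              ((P1 (Fin.castLE hl1 i)).ev' ∘ₗ sectIncl LD _ (hP1D _)) ∘ₗ sec))
          (Sum.elim
            (fun p : Fin N2 × Fin 3 =>
              a2 p.2 ∘ₗ ((P2 p.1).ev.toLinearMap ∘ₗ sectIncl LD _ (hP2D p.1)) ∘ₗ sec)
            (Sum.elim
              (fun p : Fin l2 × (Fin 3 ⊕ Fin 3) =>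
                Sum.elim
                  (fun j => a2 j ∘ₗ ((P2 (Fin.castLE hl2 p.1)).ev.toLinearMap ∘ₗ
                    sectIncl LD _ (hP2D _)) ∘ₗ sec)
                  (fun j => a2 j ∘ₗ ((P2 (Fin.castLE hl2 p.1)).ev' ∘ₗ
                    sectIncl LD _ (hP2D _)) ∘ₗ sec) p.2)
              (Sum.elim
                (fun p : Fin N4 × Fin (bilinearComplexity Fq E4) =>
                  a4 p.2 ∘ₗ ((P4 p.1).ev.toLinearMap ∘ₗ sectIncl LD _ (hP4D p.1)) ∘ₗ sec)
                (fun p : Fin l4 × (Fin (bilinearComplexity Fq E4) ⊕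
                    Fin (bilinearComplexity Fq E4)) =>
                  Sum.elim
                    (fun j => a4 j ∘ₗ ((P4 (Fin.castLE hl4 p.1)).ev.toLinearMap ∘ₗ
                      sectIncl LD _ (hP4D _)) ∘ₗ sec)
                    (fun j => a4 j ∘ₗ ((P4 (Fin.castLE hl4 p.1)).ev' ∘ₗ
                      sectIncl LD _ (hP4D _)) ∘ₗ sec) p.2))))),
      Sum.elim
        (fun i : Fin N1 => ((P1 i).ev.toLinearMap ∘ₗ sectIncl LD _ (hP1D i)) ∘ₗ sec)
        (Sum.elim
          (Sum.elim
            (fun i : Fin l1 =>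
              ((P1 (Fin.castLE hl1 i)).ev' ∘ₗ sectIncl LD _ (hP1D _)) ∘ₗ sec)
            (fun i : Fin l1 =>
              ((P1 (Fin.castLE hl1 i)).ev.toLinearMap ∘ₗ sectIncl LD _ (hP1D _)) ∘ₗ sec))
          (Sum.elim
            (fun p : Fin N2 × Fin 3 =>
              b2 p.2 ∘ₗ ((P2 p.1).ev.toLinearMap ∘ₗ sectIncl LD _ (hP2D p.1)) ∘ₗ sec)
            (Sum.elim
              (fun p : Fin l2 × (Fin 3 ⊕ Fin 3) =>
                Sum.elim
                  (fun j => b2 j ∘ₗ ((P2 (Fin.castLE hl2 p.1)).ev' ∘ₗ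
                    sectIncl LD _ (hP2D _)) ∘ₗ sec)
                  (fun j => b2 j ∘ₗ ((P2 (Fin.castLE hl2 p.1)).ev.toLinearMap ∘ₗ
                    sectIncl LD _ (hP2D _)) ∘ₗ sec) p.2)
              (Sum.elim
                (fun p : Fin N4 × Fin (bilinearComplexity Fq E4) =>
                  b4 p.2 ∘ₗ ((P4 p.1).ev.toLinearMap ∘ₗ sectIncl LD _ (hP4D p.1)) ∘ₗ sec)
                (fun p : Fin l4 × (Fin (bilinearComplexity Fq E4) ⊕
                    Fin (bilinearComplexity Fq E4)) =>
                  Sum.elim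
                    (fun j => b4 j ∘ₗ ((P4 (Fin.castLE hl4 p.1)).ev' ∘ₗ
                      sectIncl LD _ (hP4D _)) ∘ₗ sec)
                    (fun j => b4 j ∘ₗ ((P4 (Fin.castLE hl4 p.1)).ev.toLinearMap ∘ₗ
                      sectIncl LD _ (hP4D _)) ∘ₗ sec) p.2))))),
      fun i => (Q.ev.toLinearMap ∘ₗ sectIncl L2D Q.O hQ2D ∘ₗ R)
        (Sum.elim
          (fun i : Fin N1 => (Pi.single i (1 : Fq), 0))
          (Sum.elim
            (Sum.elim
              (fun i : Fin l1 => (0, Pi.single i (1 : Fq), 0))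
              (fun i : Fin l1 => (0, Pi.single i (1 : Fq), 0)))
            (Sum.elim
              (fun p : Fin N2 × Fin 3 => (0, 0, Pi.single p.1 (c2 p.2), 0))
              (Sum.elim
                (fun p : Fin l2 × (Fin 3 ⊕ Fin 3) =>
                  (0, 0, 0, Pi.single p.1 (c2 (Sum.elim id id p.2)), 0))
                (Sum.elim
                  (fun p : Fin N4 × Fin (bilinearComplexity Fq E4) =>
                    (0, 0, 0, 0, Pi.single p.1 (c4 p.2), 0))
                  (fun p : Fin l4 × (Fin (bilinearComplexity Fq E4) ⊕
                      Fin (bilinearComplexity Fq E4)) =>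
                    (0, 0, 0, 0, 0, Pi.single p.1 (c4 (Sum.elim id id p.2)))))))) i),
      ?_⟩
    intro x y
    have e1x : Q.ev ⟨(sec x).1, hQD _ (sec x).2⟩ = x := DFunLike.congr_fun hs x
    have e1y : Q.ev ⟨(sec y).1, hQD _ (sec y).2⟩ = y := DFunLike.congr_fun hs y
    have e2 : R (EvP ⟨(sec x).1 * (sec y).1, hmul _ (sec x).2 _ (sec y).2⟩)
        = ⟨(sec x).1 * (sec y).1, hmul _ (sec x).2 _ (sec y).2⟩ := DFunLike.congr_fun hR _
    have hxy : x * y = (Q.ev.toLinearMap ∘ₗ sectIncl L2D Q.O hQ2D ∘ₗ R)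
        (EvP ⟨(sec x).1 * (sec y).1, hmul _ (sec x).2 _ (sec y).2⟩) := by
      calc x * y
          = Q.ev ⟨(sec x).1, hQD _ (sec x).2⟩ * Q.ev ⟨(sec y).1, hQD _ (sec y).2⟩ := by
            rw [e1x, e1y]
        _ = Q.ev (⟨(sec x).1, hQD _ (sec x).2⟩ * ⟨(sec y).1, hQD _ (sec y).2⟩) :=
            (map_mul _ _ _).symm
        _ = (Q.ev.toLinearMap ∘ₗ sectIncl L2D Q.O hQ2D)
            (⟨(sec x).1 * (sec y).1, hmul _ (sec x).2 _ (sec y).2⟩ : L2D) := rfl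
        _ = _ := by
            conv_lhs => rw [← e2]
            rfl
    rw [hxy]
    simp only []
    simp only [← map_smul, ← map_sum]
    congr 1
    rw [hEvP]
    simp only [Fintype.sum_sum_type, Fintype.sum_prod_type, Sum.elim_inl, Sum.elim_inr]
    refine Prod.ext ?_ (Prod.ext ?_ (Prod.ext ?_ (Prod.ext ?_ (Prod.ext ?_ ?_)))) <;>
      simp only [LinearMap.prod_apply, Pi.prod, Prod.fst_add, Prod.snd_add, Prod.fst_sum,
        Prod.snd_sum, Prod.smul_fst, Prod.smul_snd, smul_zero, Finset.sum_const_zero,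
        add_zero, zero_add] <;>
      funext k
    · simp only [LinearMap.pi_apply, LinearMap.comp_apply, AlgHom.toLinearMap_apply,
        sectIncl_apply, Finset.sum_apply, Pi.smul_apply, Pi.single_apply, smul_eq_mul,
        mul_ite, mul_one, mul_zero, Finset.sum_ite_eq, Finset.mem_univ, if_true]
      exact map_mul (P1 k).ev ⟨(sec x).1, hP1D k _ (sec x).2⟩ ⟨(sec y).1, hP1D k _ (sec y).2⟩
    · simp only [LinearMap.pi_apply, LinearMap.comp_apply, AlgHom.toLinearMap_apply,
        sectIncl_apply, Finset.sum_apply, Pi.add_apply, Pi.smul_apply, Pi.single_apply,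
        smul_eq_mul, mul_ite, mul_one, mul_zero, Finset.sum_ite_eq, Finset.mem_univ, if_true]
      exact (P1 (Fin.castLE hl1 k)).leibniz ⟨(sec x).1, hP1D _ _ (sec x).2⟩
        ⟨(sec y).1, hP1D _ _ (sec y).2⟩
    · simp only [LinearMap.pi_apply, LinearMap.comp_apply, AlgHom.toLinearMap_apply,
        sectIncl_apply, Finset.sum_apply, Pi.smul_apply, Pi.single_apply, smul_ite,
        smul_zero, id_eq]
      rw [sum_sum_ite_eq]
      exact (map_mul (P2 k).ev ⟨(sec x).1, hP2D k _ (sec x).2⟩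
        ⟨(sec y).1, hP2D k _ (sec y).2⟩).trans (h2 _ _)
    · simp only [LinearMap.pi_apply, LinearMap.comp_apply, AlgHom.toLinearMap_apply,
        sectIncl_apply, Finset.sum_apply, Pi.add_apply, Pi.smul_apply, Pi.single_apply,
        smul_ite, smul_zero, id_eq]
      rw [Finset.sum_add_distrib, sum_sum_ite_eq, sum_sum_ite_eq]
      exact ((P2 (Fin.castLE hl2 k)).leibniz ⟨(sec x).1, hP2D _ _ (sec x).2⟩
        ⟨(sec y).1, hP2D _ _ (sec y).2⟩).trans (congrArg₂ (· + ·) (h2 _ _) (h2 _ _))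
    · simp only [LinearMap.pi_apply, LinearMap.comp_apply, AlgHom.toLinearMap_apply,
        sectIncl_apply, Finset.sum_apply, Pi.smul_apply, Pi.single_apply, smul_ite,
        smul_zero, id_eq]
      rw [sum_sum_ite_eq]
      exact (map_mul (P4 k).ev ⟨(sec x).1, hP4D k _ (sec x).2⟩
        ⟨(sec y).1, hP4D k _ (sec y).2⟩).trans (h4 _ _)
    · simp only [LinearMap.pi_apply, LinearMap.comp_apply, AlgHom.toLinearMap_apply,
        sectIncl_apply, Finset.sum_apply, Pi.add_apply, Pi.smul_apply, Pi.single_apply,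
        smul_ite, smul_zero, id_eq]
      rw [Finset.sum_add_distrib, sum_sum_ite_eq, sum_sum_ite_eq]
      exact ((P4 (Fin.castLE hl4 k)).leibniz ⟨(sec x).1, hP4D _ _ (sec x).2⟩
        ⟨(sec y).1, hP4D _ _ (sec y).2⟩).trans (congrArg₂ (· + ·) (h4 _ _) (h4 _ _))
  obtain ⟨a, b, c, key⟩ := key
  refine le_trans (bc_le_card a b c key) (le_of_eq ?_)
  simp only [Fintype.card_sum, Fintype.card_prod, Fintype.card_fin]
  ring
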